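/- If the power region P_SIR contains a vector with all components strictly positive, then there exists a unique power allocation p* ∈ ℝ^K such that SIR_i(p*) = γ_i for all i = 1,…,K and p* ≤ p componentwise for every p ∈ P_SIR; moreover all components of p* are strictly positive. -/

import Mathlib

open Matrix BigOperators Filter Topology

/-- Signal-to-interference ratio of user `i`. -/
noncomputable def SIR {K : ℕ} (A : Matrix (Fin K) (Fin K) ℝ) (C : Fin K → ℝ)
    (σ2 : ℝ) (p : Fin K → ℝ) (i : Fin K) : ℝ :=
  A i i * p i / ((∑ j ∈ Finset.univ.erase i, A i j * p j) + C i * σ2)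

/-- The power region. -/
noncomputable def PSIR {K : ℕ} (A : Matrix (Fin K) (Fin K) ℝ) (C : Fin K → ℝ)
    (σ2 : ℝ) (γ : Fin K → ℝ) : Set (Fin K → ℝ) :=
  {p | (∀ i, 0 ≤ p i) ∧ ∀ i, γ i ≤ SIR A C σ2 p i}

namespace SirAux

variable {K : ℕ}

/-- The linear interference part. -/
noncomputable def Bmap (A : Matrix (Fin K) (Fin K) ℝ) (γ : Fin K → ℝ)
    (p : Fin K → ℝ) (i : Fin K) : ℝ :=
  γ i / A i i * ∑ j ∈ Finset.univ.erase i, A i j * p j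

/-- The constant (noise) part. -/
noncomputable def cvec (A : Matrix (Fin K) (Fin K) ℝ) (C : Fin K → ℝ)
    (σ2 : ℝ) (γ : Fin K → ℝ) (i : Fin K) : ℝ :=
  γ i / A i i * (C i * σ2)

/-- The standard interference map. -/
noncomputable def Tmap (A : Matrix (Fin K) (Fin K) ℝ) (C : Fin K → ℝ)
    (σ2 : ℝ) (γ : Fin K → ℝ) (p : Fin K → ℝ) (i : Fin K) : ℝ :=
  Bmap A γ p i + cvec A C σ2 γ i

variable {A : Matrix (Fin K) (Fin K) ℝ} {C : Fin K → ℝ} {σ2 : ℝ} {γ : Fin K → ℝ}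

lemma cvec_pos (hAd : ∀ i, 0 < A i i) (hC : ∀ i, 0 < C i) (hσ : 0 < σ2)
    (hγ : ∀ i, 0 < γ i) (i : Fin K) : 0 < cvec A C σ2 γ i :=
  mul_pos (div_pos (hγ i) (hAd i)) (mul_pos (hC i) hσ)

lemma Bmap_nonneg (hA : ∀ i j, 0 ≤ A i j) (hAd : ∀ i, 0 < A i i)
    (hγ : ∀ i, 0 < γ i) {p : Fin K → ℝ} (hp : ∀ i, 0 ≤ p i) (i : Fin K) :
    0 ≤ Bmap A γ p i :=
  mul_nonneg (div_nonneg (hγ i).le (hAd i).le)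
    (Finset.sum_nonneg fun j _ => mul_nonneg (hA i j) (hp j))

lemma Bmap_mono (hA : ∀ i j, 0 ≤ A i j) (hAd : ∀ i, 0 < A i i)
    (hγ : ∀ i, 0 < γ i) {p q : Fin K → ℝ} (hpq : ∀ i, p i ≤ q i) (i : Fin K) :
    Bmap A γ p i ≤ Bmap A γ q i :=
  mul_le_mul_of_nonneg_left
    (Finset.sum_le_sum fun j _ => mul_le_mul_of_nonneg_left (hpq j) (hA i j))
    (div_nonneg (hγ i).le (hAd i).le)

lemma Bmap_sub (p q : Fin K → ℝ) (i : Fin K) :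
    Bmap A γ (fun j => p j - q j) i = Bmap A γ p i - Bmap A γ q i := by
  simp only [Bmap, mul_sub, Finset.sum_sub_distrib]

lemma Bmap_smul (t : ℝ) (q : Fin K → ℝ) (i : Fin K) :
    Bmap A γ (fun j => t * q j) i = t * Bmap A γ q i := by
  simp only [Bmap, Finset.mul_sum]
  exact Finset.sum_congr rfl fun j _ => by ring

/-- Key comparison lemma. -/
lemma key (hK : 1 ≤ K) (hA : ∀ i j, 0 ≤ A i j) (hAd : ∀ i, 0 < A i i)
    (hC : ∀ i, 0 < C i) (hσ : 0 < σ2) (hγ : ∀ i, 0 < γ i)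
    {q : Fin K → ℝ} (hq : ∀ i, 0 < q i)
    (hTq : ∀ i, Tmap A C σ2 γ q i ≤ q i)
    {d : Fin K → ℝ} (hd : ∀ i, d i ≤ Bmap A γ d i) : ∀ i, d i ≤ 0 := by
  by_contra hcon
  push_neg at hcon
  obtain ⟨i₁, hi₁⟩ := hcon
  obtain ⟨i₀, -, hmax⟩ := Finset.exists_max_image Finset.univ (fun i => d i / q i)
    ⟨i₁, Finset.mem_univ i₁⟩
  set t := d i₀ / q i₀ with ht_def
  have ht : 0 < t := lt_of_lt_of_le (div_pos hi₁ (hq i₁)) (hmax i₁ (Finset.mem_univ i₁))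
  have hdt : ∀ j, d j ≤ t * q j := fun j =>
    (div_le_iff₀ (hq j)).mp (hmax j (Finset.mem_univ j))
  have h1 : d i₀ ≤ t * Bmap A γ q i₀ := by
    calc d i₀ ≤ Bmap A γ d i₀ := hd i₀
    _ ≤ Bmap A γ (fun j => t * q j) i₀ := Bmap_mono hA hAd hγ hdt i₀
    _ = t * Bmap A γ q i₀ := Bmap_smul t q i₀
  have h2 : Bmap A γ q i₀ ≤ q i₀ - cvec A C σ2 γ i₀ := by
    have := hTq i₀
    simp only [Tmap] at this
    linarith
  have h3 : d i₀ ≤ t * q i₀ - t * cvec A C σ2 γ i₀ := by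
    calc d i₀ ≤ t * Bmap A γ q i₀ := h1
    _ ≤ t * (q i₀ - cvec A C σ2 γ i₀) := mul_le_mul_of_nonneg_left h2 ht.le
    _ = t * q i₀ - t * cvec A C σ2 γ i₀ := by ring
  have h4 : t * q i₀ = d i₀ := div_mul_cancel₀ _ (hq i₀).ne'
  have h5 : 0 < t * cvec A C σ2 γ i₀ :=
    mul_pos ht (cvec_pos hAd hC hσ hγ i₀)
  linarith

lemma denom_pos (hA : ∀ i j, 0 ≤ A i j) (hC : ∀ i, 0 < C i) (hσ : 0 < σ2)
    {p : Fin K → ℝ} (hp : ∀ i, 0 ≤ p i) (i : Fin K) :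
    0 < (∑ j ∈ Finset.univ.erase i, A i j * p j) + C i * σ2 :=
  add_pos_of_nonneg_of_pos
    (Finset.sum_nonneg fun j _ => mul_nonneg (hA i j) (hp j))
    (mul_pos (hC i) hσ)

/-- SIR = γ implies fixed point (no nonnegativity needed). -/
lemma fixed_of_sir_eq (hAd : ∀ i, 0 < A i i) (hγ : ∀ i, 0 < γ i)
    {p : Fin K → ℝ} (hp : ∀ i, SIR A C σ2 p i = γ i) (i : Fin K) :
    p i = Tmap A C σ2 γ p i := by
  have h := hp i
  set D := (∑ j ∈ Finset.univ.erase i, A i j * p j) + C i * σ2 with hD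
  have hDne : D ≠ 0 := by
    intro h0
    rw [SIR, ← hD, h0, div_zero] at h
    exact absurd h.symm (hγ i).ne'
  rw [SIR, ← hD, div_eq_iff hDne] at h
  have hpi : p i = γ i * D / A i i := by
    rw [eq_div_iff (hAd i).ne']; linarith [h]
  rw [Tmap, Bmap, cvec, hpi, hD]; ring

/-- For nonnegative p: fixed point implies SIR = γ. -/
lemma sir_eq_of_fixed (hA : ∀ i j, 0 ≤ A i j) (hAd : ∀ i, 0 < A i i)
    (hC : ∀ i, 0 < C i) (hσ : 0 < σ2)
    {p : Fin K → ℝ} (hp : ∀ i, 0 ≤ p i)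
    (hfix : ∀ i, p i = Tmap A C σ2 γ p i) (i : Fin K) :
    SIR A C σ2 p i = γ i := by
  have hD := denom_pos hA hC hσ hp i
  rw [SIR, div_eq_iff hD.ne', hfix i, Tmap, Bmap, cvec]
  have hAi : A i i ≠ 0 := (hAd i).ne'
  field_simp

/-- For nonnegative p: γ ≤ SIR iff T p ≤ p. -/
lemma sir_ge_iff (hA : ∀ i j, 0 ≤ A i j) (hAd : ∀ i, 0 < A i i)
    (hC : ∀ i, 0 < C i) (hσ : 0 < σ2)
    {p : Fin K → ℝ} (hp : ∀ i, 0 ≤ p i) (i : Fin K) :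
    γ i ≤ SIR A C σ2 p i ↔ Tmap A C σ2 γ p i ≤ p i := by
  have hD := denom_pos hA hC hσ hp i
  rw [SIR, le_div_iff₀ hD, Tmap, Bmap, cvec]
  constructor <;> intro h
  · rw [div_mul_eq_mul_div, div_mul_eq_mul_div, ← add_div,
      div_le_iff₀ (hAd i)]
    nlinarith [h]
  · rw [div_mul_eq_mul_div, div_mul_eq_mul_div, ← add_div,
      div_le_iff₀ (hAd i)] at h
    nlinarith [h]

lemma Tmap_continuous : Continuous (Tmap A C σ2 γ) := by
  apply continuous_pi
  intro i
  apply Continuous.add _ continuous_const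
  exact continuous_const.mul
    (continuous_finset_sum _ fun j _ => continuous_const.mul (continuous_apply j))

end SirAux

open SirAux

/-- If the power region contains a strictly positive vector, then there is a
unique power allocation `p*` attaining every SIR threshold with equality and
componentwise minimal in `P_SIR`; moreover `p*` is strictly positive. -/
theorem exists_unique_min_power {K : ℕ} (hK : 1 ≤ K)
    (A : Matrix (Fin K) (Fin K) ℝ) (C : Fin K → ℝ) (σ2 : ℝ) (γ : Fin K → ℝ)
    (hA : ∀ i j, 0 ≤ A i j) (hAd : ∀ i, 0 < A i i)
    (hC : ∀ i, 0 < C i) (hσ : 0 < σ2) (hγ : ∀ i, 0 < γ i)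
    (hne : ∃ p ∈ PSIR A C σ2 γ, ∀ i, 0 < p i) :
    (∃! pstar : Fin K → ℝ,
      (∀ i, SIR A C σ2 pstar i = γ i) ∧
      ∀ p ∈ PSIR A C σ2 γ, ∀ i, pstar i ≤ p i) ∧
    ∀ pstar : Fin K → ℝ,
      ((∀ i, SIR A C σ2 pstar i = γ i) ∧
        ∀ p ∈ PSIR A C σ2 γ, ∀ i, pstar i ≤ p i) →
      ∀ i, 0 < pstar i := by
  obtain ⟨p₀, ⟨hp₀n, hp₀s⟩, hp₀pos⟩ := hne
  set T := Tmap A C σ2 γ with hT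
  have hTp₀ : ∀ i, T p₀ i ≤ p₀ i := fun i =>
    (sir_ge_iff hA hAd hC hσ hp₀n i).mp (hp₀s i)
  -- the decreasing iteration
  set seq : ℕ → Fin K → ℝ := fun n => T^[n] p₀ with hseq
  have hTmono : ∀ p q : Fin K → ℝ, (∀ i, p i ≤ q i) → ∀ i, T p i ≤ T q i := by
    intro p q hpq i
    exact add_le_add_left (Bmap_mono hA hAd hγ hpq i) _
  have hTnonneg : ∀ p : Fin K → ℝ, (∀ i, 0 ≤ p i) → ∀ i, 0 ≤ T p i := by
    intro p hp i
    exact add_nonneg (Bmap_nonneg hA hAd hγ hp i) (cvec_pos hAd hC hσ hγ i).le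
  have hseq_nonneg : ∀ n i, 0 ≤ seq n i := by
    intro n
    induction n with
    | zero => exact hp₀n
    | succ n ih =>
      intro i
      simp only [hseq, Function.iterate_succ_apply']
      exact hTnonneg _ ih i
  have hseq_dec : ∀ n i, seq (n + 1) i ≤ seq n i := by
    intro n
    induction n with
    | zero =>
      intro i
      simpa [hseq, Function.iterate_succ_apply'] using hTp₀ i
    | succ n ih =>
      intro i
      simp only [hseq, Function.iterate_succ_apply']
      exact hTmono _ _ (fun j => by
        simpa [hseq, Function.iterate_succ_apply'] using ih j) i
  -- the limit
  set pstar : Fin K → ℝ := fun i => ⨅ n, seq n i with hpstar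
  have hanti : ∀ i, Antitone fun n => seq n i := fun i =>
    antitone_nat_of_succ_le fun n => hseq_dec n i
  have hbdd : ∀ i, BddBelow (Set.range fun n => seq n i) := fun i =>
    ⟨0, fun x ⟨n, hn⟩ => hn ▸ hseq_nonneg n i⟩
  have htendi : ∀ i, Tendsto (fun n => seq n i) atTop (𝓝 (pstar i)) := fun i =>
    tendsto_atTop_ciInf (hanti i) (hbdd i)
  have htend : Tendsto seq atTop (𝓝 pstar) := tendsto_pi_nhds.mpr htendi
  have hps_nonneg : ∀ i, 0 ≤ pstar i := fun i =>
    le_ciInf fun n => hseq_nonneg n i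
  -- p* is a fixed point
  have hfix : ∀ i, pstar i = T pstar i := by
    have h1 : Tendsto (fun n => T (seq n)) atTop (𝓝 (T pstar)) :=
      (Tmap_continuous.tendsto pstar).comp htend
    have h2 : (fun n => T (seq n)) = fun n => seq (n + 1) := by
      funext n
      rw [hseq]
      exact (Function.iterate_succ_apply' T n p₀).symm
    rw [h2] at h1
    have h3 : Tendsto (fun n => seq (n + 1)) atTop (𝓝 pstar) :=
      htend.comp (tendsto_add_atTop_nat 1)
    have h4 := tendsto_nhds_unique h3 h1
    intro i
    exact congrFun h4 i
  have hps_sir : ∀ i, SIR A C σ2 pstar i = γ i :=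
    sir_eq_of_fixed hA hAd hC hσ hps_nonneg hfix
  -- minimality
  have hmin : ∀ p ∈ PSIR A C σ2 γ, ∀ i, pstar i ≤ p i := by
    intro p ⟨hpn, hps⟩ i
    have hTp : ∀ j, T p j ≤ p j := fun j =>
      (sir_ge_iff hA hAd hC hσ hpn j).mp (hps j)
    have hd : ∀ j, (pstar j - p j) ≤ Bmap A γ (fun k => pstar k - p k) j := by
      intro j
      rw [Bmap_sub]
      have h1 := hfix j
      have h2 := hTp j
      simp only [hT, Tmap] at h1 h2
      linarith
    have := key hK hA hAd hC hσ hγ hp₀pos hTp₀ hd i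
    linarith
  -- uniqueness of fixed points
  have huniq : ∀ p₁ p₂ : Fin K → ℝ, (∀ i, p₁ i = T p₁ i) → (∀ i, p₂ i = T p₂ i) →
      p₁ = p₂ := by
    intro p₁ p₂ h₁ h₂
    have hd12 : ∀ j, (p₁ j - p₂ j) ≤ Bmap A γ (fun k => p₁ k - p₂ k) j := by
      intro j
      rw [Bmap_sub]
      have a1 := h₁ j; have a2 := h₂ j
      simp only [hT, Tmap] at a1 a2
      linarith
    have hd21 : ∀ j, (p₂ j - p₁ j) ≤ Bmap A γ (fun k => p₂ k - p₁ k) j := by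
      intro j
      rw [Bmap_sub]
      have a1 := h₁ j; have a2 := h₂ j
      simp only [hT, Tmap] at a1 a2
      linarith
    funext j
    have k1 := key hK hA hAd hC hσ hγ hp₀pos hTp₀ hd12 j
    have k2 := key hK hA hAd hC hσ hγ hp₀pos hTp₀ hd21 j
    linarith
  have hps_pos : ∀ i, 0 < pstar i := by
    intro i
    have := hfix i
    simp only [hT, Tmap] at this
    have := Bmap_nonneg hA hAd hγ hps_nonneg i
    have := cvec_pos hAd hC hσ hγ i
    linarith
  refine ⟨⟨pstar, ⟨hps_sir, hmin⟩, ?_⟩, ?_⟩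
  · intro q ⟨hq_sir, _⟩
    exact huniq q pstar (fixed_of_sir_eq hAd hγ hq_sir) hfix
  · intro q ⟨hq_sir, _⟩ i
    have : q = pstar := huniq q pstar (fixed_of_sir_eq hAd hγ hq_sir) hfix
    rw [this]
    exact hps_pos i
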